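/- Let Q : ℕ → ℝ satisfy the α-β recurrence Q(n) = α·Q(n/β) + Σ_i k_i·n^{l_i}·(log n)^{m_i} (n a power of β > 1, α ≥ 1, k_i > 0, l_i, m_i ≥ 0, Q(1) = O(Σ_r k_r)). Then Q(n) = O( Σ_{i : l_i > log_β α} k_i n^{l_i} (log n)^{m_i} + Σ_{j : l_j = log_β α} k_j n^{l_j} (log n)^{m_j + 1} + Σ_{r : l_r < log_β α} k_r n^{log_β α} ). -/

import Mathlib

/- Main Theorem (Theorem 4.2): solution of the multi-term α-β recurrence
`Q(n) = α·Q(n/β) + Σ_i k_i·n^{l_i}·(log n)^{m_i}`, encoded on powers of `β` by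
`q i = Q(β^i)`. Each term contributes according to whether its exponent `l_i`
exceeds, equals, or is below the critical exponent `log_β α`. -/
set_option maxHeartbeats 3200000 in
open Classical in
theorem stmt9 {ι : Type*} [Fintype ι] (α β : ℝ) (hα : 1 ≤ α) (hβ : 1 < β)
    (k l m : ι → ℝ) (hk : ∀ j, 0 < k j) (hl : ∀ j, 0 ≤ l j) (hm : ∀ j, 0 ≤ m j)
    (q : ℕ → ℝ)
    (hrec : ∀ i : ℕ, q (i + 1) = α * q i +
      ∑ j, k j * (β ^ (i + 1)) ^ (l j) * (Real.log (β ^ (i + 1))) ^ (m j))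
    (hbase : ∃ c : ℝ, q 0 ≤ c * ∑ j, k j) :
    ∃ C > 0, ∀ i : ℕ, 1 ≤ i →
      q i ≤ C * ((∑ j ∈ Finset.univ.filter (fun j => Real.logb β α < l j),
                    k j * (β ^ i) ^ (l j) * (Real.log (β ^ i)) ^ (m j)) +
                 (∑ j ∈ Finset.univ.filter (fun j => l j = Real.logb β α),
                    k j * (β ^ i) ^ (l j) * (Real.log (β ^ i)) ^ (m j + 1)) +
                 (∑ j ∈ Finset.univ.filter (fun j => l j < Real.logb β α),
                    k j * (β ^ i) ^ (Real.logb β α))) := by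
  classical
  obtain ⟨c, hc⟩ := hbase
  set L := Real.logb β α with hLdef
  have hβ0 : (0:ℝ) < β := lt_trans one_pos hβ
  have hLb : 0 < Real.log β := Real.log_pos hβ
  set Lb := Real.log β with hLbdef
  have hα0 : (0:ℝ) < α := lt_of_lt_of_le one_pos hα
  have hβL : β ^ L = α := Real.rpow_logb hβ0 (ne_of_gt hβ) hα0
  have hL0 : 0 ≤ L := Real.logb_nonneg hβ hα
  set g : ℕ → ℝ := fun t => ∑ j, k j * ((β ^ t : ℝ)) ^ (l j) * ((t : ℝ) * Lb) ^ (m j) with hg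
  have hrec' : ∀ i : ℕ, q (i+1) = α * q i + g (i+1) := by
    intro i; rw [hrec i]; congr 1
    apply Finset.sum_congr rfl; intro j _
    rw [Real.log_pow]
  -- unrolled recurrence
  have key : ∀ i : ℕ, q i = α ^ i * q 0 + ∑ t ∈ Finset.Icc 1 i, α ^ (i - t) * g t := by
    intro i
    induction i with
    | zero => simp
    | succ n ih =>
      rw [hrec' n, ih, Finset.sum_Icc_succ_top (by omega : 1 ≤ n+1)]
      have h1 : ∑ t ∈ Finset.Icc 1 n, α ^ (n + 1 - t) * g t
           = α * ∑ t ∈ Finset.Icc 1 n, α ^ (n - t) * g t := by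
        rw [Finset.mul_sum]
        apply Finset.sum_congr rfl
        intro t ht
        have htn : t ≤ n := (Finset.mem_Icc.mp ht).2
        rw [show n + 1 - t = (n - t) + 1 by omega, pow_succ]
        ring
      rw [h1, Nat.sub_self, pow_zero, pow_succ]
      ring
  set c' := max c 0 with hc'def
  have hc'0 : (0:ℝ) ≤ c' := le_max_right _ _
  set s : ι → ℝ := fun j => β ^ (l j - L) with hsdef
  have hs0 : ∀ j, 0 < s j := fun j => Real.rpow_pos_of_pos hβ0 _
  set B : ι → ℝ := fun j => ∑' t : ℕ, (t:ℝ) ^ (⌈m j⌉₊) * (s j) ^ t with hBdef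
  set A : ι → ℝ := fun j =>
    if L < l j then c' * Lb ^ (-(m j)) + s j / (s j - 1)
    else if l j = L then (c' + Lb ^ (m j)) * Lb ^ (-(m j + 1))
    else c' + Lb ^ (m j) * B j with hAdef
  set U : ι → ℕ → ℝ := fun j i =>
    if L < l j then k j * ((β ^ i : ℝ)) ^ (l j) * ((i:ℝ) * Lb) ^ (m j)
    else if l j = L then k j * ((β ^ i : ℝ)) ^ (l j) * ((i:ℝ) * Lb) ^ (m j + 1)
    else k j * ((β ^ i : ℝ)) ^ L with hUdef
  -- basic facts
  have hβi1 : ∀ i : ℕ, (1:ℝ) ≤ β ^ i := fun i => one_le_pow₀ hβ.le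
  have hαi : ∀ i : ℕ, α ^ i = ((β:ℝ) ^ i) ^ L := by
    intro i
    rw [← hβL, ← Real.rpow_natCast (β ^ L) i, ← Real.rpow_natCast β i,
      ← Real.rpow_mul hβ0.le, ← Real.rpow_mul hβ0.le, mul_comm]
  -- the per-term bound
  have main : ∀ j, ∀ i : ℕ, 1 ≤ i →
      c' * k j * α ^ i + ∑ t ∈ Finset.Icc 1 i,
        α ^ (i - t) * (k j * ((β ^ t : ℝ)) ^ (l j) * ((t:ℝ) * Lb) ^ (m j))
      ≤ A j * U j i := by
    intro j i hi
    have hi1 : (1:ℝ) ≤ (i:ℝ) := by exact_mod_cast hi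
    have hi0 : (0:ℝ) < (i:ℝ) := lt_of_lt_of_le one_pos hi1
    have hPpos : 0 < ((β:ℝ) ^ i) ^ L := Real.rpow_pos_of_pos (by positivity) L
    have hP1 : 1 ≤ ((β:ℝ) ^ i) ^ L := by
      calc (1:ℝ) = (1:ℝ) ^ L := (Real.one_rpow L).symm
        _ ≤ ((β:ℝ) ^ i) ^ L := Real.rpow_le_rpow zero_le_one (hβi1 i) hL0
    have hterm : ∀ t ∈ Finset.Icc 1 i,
        α ^ (i - t) * (k j * ((β ^ t : ℝ)) ^ (l j) * ((t:ℝ) * Lb) ^ (m j))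
        = (k j * Lb ^ (m j) * (((β:ℝ) ^ i) ^ L)) * ((s j) ^ t * (t:ℝ) ^ (m j)) := by
      intro t ht
      obtain ⟨ht1, hti⟩ := Finset.mem_Icc.mp ht
      have ht0 : (0:ℝ) ≤ (t:ℝ) := Nat.cast_nonneg t
      have e1 : ((t:ℝ) * Lb) ^ (m j) = (t:ℝ) ^ (m j) * Lb ^ (m j) :=
        Real.mul_rpow ht0 hLb.le
      have e2 : α ^ (i - t) * ((β ^ t : ℝ)) ^ (l j)
          = (((β:ℝ) ^ i) ^ L) * (s j) ^ t := by
        have c1 : (α:ℝ) ^ (i - t) = β ^ (L * ((i:ℝ) - t)) := by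
          rw [← hβL, ← Real.rpow_natCast (β ^ L) (i - t), ← Real.rpow_mul hβ0.le]
          congr 1
          rw [Nat.cast_sub hti]
        have c2 : ((β:ℝ) ^ t) ^ (l j) = β ^ ((t:ℝ) * l j) := by
          rw [← Real.rpow_natCast β t, ← Real.rpow_mul hβ0.le]
        have c3 : ((β:ℝ) ^ i) ^ L = β ^ ((i:ℝ) * L) := by
          rw [← Real.rpow_natCast β i, ← Real.rpow_mul hβ0.le]
        have c4 : (s j) ^ t = β ^ ((l j - L) * (t:ℝ)) := by
          rw [hsdef]; dsimp only
          rw [← Real.rpow_natCast (β ^ (l j - L)) t, ← Real.rpow_mul hβ0.le]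
        rw [c1, c2, c3, c4, ← Real.rpow_add hβ0, ← Real.rpow_add hβ0]
        congr 1; ring
      rw [e1]
      linear_combination (k j * Lb ^ (m j) * (t:ℝ) ^ (m j)) * e2
    rw [Finset.sum_congr rfl hterm, ← Finset.mul_sum, hαi i]
    have hEnn : (0:ℝ) ≤ ∑ t ∈ Finset.Icc 1 i, (s j) ^ t * (t:ℝ) ^ (m j) :=
      Finset.sum_nonneg fun t _ =>
        mul_nonneg (pow_nonneg (hs0 j).le t) (Real.rpow_nonneg (Nat.cast_nonneg t) _)
    have hKnn : (0:ℝ) ≤ k j * Lb ^ (m j) * (((β:ℝ) ^ i) ^ L) :=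
      mul_nonneg (mul_nonneg (hk j).le (Real.rpow_nonneg hLb.le _)) hPpos.le
    have him : (1:ℝ) ≤ (i:ℝ) ^ (m j) := by
      calc (1:ℝ) = (1:ℝ) ^ (m j) := (Real.one_rpow _).symm
        _ ≤ (i:ℝ) ^ (m j) := Real.rpow_le_rpow zero_le_one hi1 (hm j)
    have hiLb : ((i:ℝ) * Lb) ^ (m j) = (i:ℝ) ^ (m j) * Lb ^ (m j) :=
      Real.mul_rpow hi0.le hLb.le
    rcases lt_trichotomy L (l j) with hcase | hcase | hcase
    · -- l j > L
      have hs1 : 1 < s j := by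
        rw [hsdef]
        exact (Real.one_lt_rpow_iff_of_pos hβ0).mpr (Or.inl ⟨hβ, by linarith⟩)
      have hd : (0:ℝ) < s j - 1 := by linarith
      have hsi1 : (1:ℝ) ≤ (s j) ^ i := one_le_pow₀ hs1.le
      have hEbound : ∑ t ∈ Finset.Icc 1 i, (s j) ^ t * (t:ℝ) ^ (m j)
          ≤ (i:ℝ) ^ (m j) * (s j / (s j - 1) * (s j) ^ i) := by
        have h1 : ∑ t ∈ Finset.Icc 1 i, (s j) ^ t * (t:ℝ) ^ (m j)
            ≤ ∑ t ∈ Finset.Icc 1 i, (s j) ^ t * (i:ℝ) ^ (m j) := by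
          apply Finset.sum_le_sum; intro t ht
          obtain ⟨_, hti⟩ := Finset.mem_Icc.mp ht
          exact mul_le_mul_of_nonneg_left
            (Real.rpow_le_rpow (Nat.cast_nonneg t) (by exact_mod_cast hti) (hm j))
            (pow_nonneg (hs0 j).le t)
        have h2 : ∑ t ∈ Finset.Icc 1 i, (s j) ^ t ≤ s j / (s j - 1) * (s j) ^ i := by
          have hsub : Finset.Icc 1 i ⊆ Finset.range (i+1) := by
            intro t ht
            rw [Finset.mem_range]
            exact Nat.lt_succ_of_le (Finset.mem_Icc.mp ht).2
          have h3 : ∑ t ∈ Finset.Icc 1 i, (s j) ^ t ≤ ∑ t ∈ Finset.range (i+1), (s j) ^ t :=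
            Finset.sum_le_sum_of_subset_of_nonneg hsub (fun t _ _ => pow_nonneg (hs0 j).le t)
          rw [geom_sum_eq (ne_of_gt hs1)] at h3
          refine h3.trans ?_
          rw [div_le_iff₀ hd]
          have : s j / (s j - 1) * s j ^ i * (s j - 1) = s j ^ (i+1) := by
            field_simp
            ring
          rw [this]
          linarith
        calc ∑ t ∈ Finset.Icc 1 i, (s j) ^ t * (t:ℝ) ^ (m j)
            ≤ ∑ t ∈ Finset.Icc 1 i, (s j) ^ t * (i:ℝ) ^ (m j) := h1
          _ = (∑ t ∈ Finset.Icc 1 i, (s j) ^ t) * (i:ℝ) ^ (m j) := by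
              rw [Finset.sum_mul]
          _ ≤ (s j / (s j - 1) * (s j) ^ i) * (i:ℝ) ^ (m j) :=
              mul_le_mul_of_nonneg_right h2 (Real.rpow_nonneg hi0.le _)
          _ = (i:ℝ) ^ (m j) * (s j / (s j - 1) * (s j) ^ i) := by ring
      have hsplit : ((β:ℝ) ^ i) ^ (l j) = (((β:ℝ) ^ i) ^ L) * (s j) ^ i := by
        have c3 : ((β:ℝ) ^ i) ^ (l j) = β ^ ((i:ℝ) * l j) := by
          rw [← Real.rpow_natCast β i, ← Real.rpow_mul hβ0.le]
        have c4 : ((β:ℝ) ^ i) ^ L = β ^ ((i:ℝ) * L) := by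
          rw [← Real.rpow_natCast β i, ← Real.rpow_mul hβ0.le]
        have c5 : (s j) ^ i = β ^ ((l j - L) * (i:ℝ)) := by
          rw [hsdef]; dsimp only
          rw [← Real.rpow_natCast (β ^ (l j - L)) i, ← Real.rpow_mul hβ0.le]
        rw [c3, c4, c5, ← Real.rpow_add hβ0]
        congr 1; ring
      have hLm : Lb ^ (-(m j)) * Lb ^ (m j) = 1 := by
        rw [← Real.rpow_add hLb, show -(m j) + m j = 0 by ring, Real.rpow_zero]
      rw [hAdef, hUdef]; dsimp only; rw [if_pos hcase, if_pos hcase, hsplit, hiLb]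
      have t1 : c' * k j * (((β:ℝ) ^ i) ^ L)
          ≤ c' * (k j * (((β:ℝ) ^ i) ^ L) * ((s j) ^ i * (i:ℝ) ^ (m j))) := by
        have h1 : (1:ℝ) ≤ (s j) ^ i * (i:ℝ) ^ (m j) := by nlinarith
        nlinarith [mul_nonneg (mul_nonneg hc'0 (hk j).le) hPpos.le]
      have t2 : (k j * Lb ^ (m j) * (((β:ℝ) ^ i) ^ L)) *
            (∑ t ∈ Finset.Icc 1 i, (s j) ^ t * (t:ℝ) ^ (m j))
          ≤ (k j * Lb ^ (m j) * (((β:ℝ) ^ i) ^ L)) *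
            ((i:ℝ) ^ (m j) * (s j / (s j - 1) * (s j) ^ i)) :=
        mul_le_mul_of_nonneg_left hEbound hKnn
      calc c' * k j * (((β:ℝ) ^ i) ^ L) + (k j * Lb ^ (m j) * (((β:ℝ) ^ i) ^ L)) *
            (∑ t ∈ Finset.Icc 1 i, (s j) ^ t * (t:ℝ) ^ (m j))
          ≤ c' * (k j * (((β:ℝ) ^ i) ^ L) * ((s j) ^ i * (i:ℝ) ^ (m j))) +
            (k j * Lb ^ (m j) * (((β:ℝ) ^ i) ^ L)) *
            ((i:ℝ) ^ (m j) * (s j / (s j - 1) * (s j) ^ i)) := add_le_add t1 t2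
        _ = (c' * Lb ^ (-(m j)) + s j / (s j - 1)) *
            (k j * ((((β:ℝ) ^ i) ^ L) * (s j) ^ i) * ((i:ℝ) ^ (m j) * Lb ^ (m j))) := by
            linear_combination (-(c' * k j * (((β:ℝ) ^ i) ^ L) * (s j) ^ i * (i:ℝ) ^ (m j))) * hLm
    · -- l j = L
      have heq : l j = L := hcase.symm
      have hsval : s j = 1 := by
        rw [hsdef]; dsimp only; rw [heq, sub_self, Real.rpow_zero]
      have hE : ∑ t ∈ Finset.Icc 1 i, (s j) ^ t * (t:ℝ) ^ (m j) ≤ (i:ℝ) ^ (m j + 1) := by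
        have h0 : ∑ t ∈ Finset.Icc 1 i, (s j) ^ t * (t:ℝ) ^ (m j)
            = ∑ t ∈ Finset.Icc 1 i, (t:ℝ) ^ (m j) :=
          Finset.sum_congr rfl fun t _ => by rw [hsval, one_pow, one_mul]
        have h1 : ∑ t ∈ Finset.Icc 1 i, (t:ℝ) ^ (m j) ≤ ∑ t ∈ Finset.Icc 1 i, (i:ℝ) ^ (m j) :=
          Finset.sum_le_sum fun t ht =>
            Real.rpow_le_rpow (Nat.cast_nonneg t)
              (by exact_mod_cast (Finset.mem_Icc.mp ht).2) (hm j)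
        have h2 : ∑ t ∈ Finset.Icc 1 i, (i:ℝ) ^ (m j) = (i:ℝ) * (i:ℝ) ^ (m j) := by
          rw [Finset.sum_const, Nat.card_Icc]
          simp [nsmul_eq_mul]
        have h3 : (i:ℝ) * (i:ℝ) ^ (m j) = (i:ℝ) ^ (m j + 1) := by
          rw [Real.rpow_add hi0, Real.rpow_one]; ring
        rw [h0]
        linarith
      have hLm : Lb ^ (-(m j + 1)) * Lb ^ (m j + 1) = 1 := by
        rw [← Real.rpow_add hLb, show -(m j + 1) + (m j + 1) = 0 by ring, Real.rpow_zero]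
      have hLbm : Lb ^ (m j + 1) = Lb ^ (m j) * Lb := by
        rw [Real.rpow_add hLb, Real.rpow_one]
      have him2 : (1:ℝ) ≤ (i:ℝ) ^ (m j + 1) := by
        calc (1:ℝ) = (1:ℝ) ^ (m j + 1) := (Real.one_rpow _).symm
          _ ≤ (i:ℝ) ^ (m j + 1) := Real.rpow_le_rpow zero_le_one hi1 (by linarith [hm j])
      have hiLb1 : ((i:ℝ) * Lb) ^ (m j + 1) = (i:ℝ) ^ (m j + 1) * Lb ^ (m j + 1) :=
        Real.mul_rpow hi0.le hLb.le
      have hnlt : ¬ L < l j := by rw [heq]; exact lt_irrefl L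
      rw [hAdef, hUdef]; dsimp only
      rw [if_neg hnlt, if_pos heq, if_neg hnlt, if_pos heq, heq, hiLb1]
      have t1 : c' * k j * (((β:ℝ) ^ i) ^ L)
          ≤ c' * k j * (((β:ℝ) ^ i) ^ L) * (i:ℝ) ^ (m j + 1) := by
        nlinarith [mul_nonneg (mul_nonneg hc'0 (hk j).le) hPpos.le]
      have t2 : (k j * Lb ^ (m j) * (((β:ℝ) ^ i) ^ L)) *
            (∑ t ∈ Finset.Icc 1 i, (s j) ^ t * (t:ℝ) ^ (m j))
          ≤ (k j * Lb ^ (m j) * (((β:ℝ) ^ i) ^ L)) * (i:ℝ) ^ (m j + 1) :=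
        mul_le_mul_of_nonneg_left hE hKnn
      calc c' * k j * (((β:ℝ) ^ i) ^ L) + (k j * Lb ^ (m j) * (((β:ℝ) ^ i) ^ L)) *
            (∑ t ∈ Finset.Icc 1 i, (s j) ^ t * (t:ℝ) ^ (m j))
          ≤ c' * k j * (((β:ℝ) ^ i) ^ L) * (i:ℝ) ^ (m j + 1) +
            (k j * Lb ^ (m j) * (((β:ℝ) ^ i) ^ L)) * (i:ℝ) ^ (m j + 1) := add_le_add t1 t2
        _ = ((c' + Lb ^ (m j)) * Lb ^ (-(m j + 1))) *
            (k j * (((β:ℝ) ^ i) ^ L) * ((i:ℝ) ^ (m j + 1) * Lb ^ (m j + 1))) := by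
            linear_combination (-((c' + Lb ^ (m j)) * k j * (((β:ℝ) ^ i) ^ L) *
              (i:ℝ) ^ (m j + 1))) * hLm
    · -- l j < L
      have hs1 : s j < 1 := by
        rw [hsdef]
        exact Real.rpow_lt_one_of_one_lt_of_neg hβ (by linarith)
      have hM : Summable (fun t : ℕ => (t:ℝ) ^ (⌈m j⌉₊) * (s j) ^ t) :=
        summable_pow_mul_geometric_of_norm_lt_one _
          (by rw [Real.norm_eq_abs, abs_of_pos (hs0 j)]; exact hs1)
      have hE : ∑ t ∈ Finset.Icc 1 i, (s j) ^ t * (t:ℝ) ^ (m j) ≤ B j := by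
        have h1 : ∑ t ∈ Finset.Icc 1 i, (s j) ^ t * (t:ℝ) ^ (m j)
            ≤ ∑ t ∈ Finset.Icc 1 i, (t:ℝ) ^ (⌈m j⌉₊) * (s j) ^ t := by
          apply Finset.sum_le_sum; intro t ht
          obtain ⟨ht1, _⟩ := Finset.mem_Icc.mp ht
          have h1t : (1:ℝ) ≤ (t:ℝ) := by exact_mod_cast ht1
          rw [mul_comm]
          refine mul_le_mul_of_nonneg_right ?_ (pow_nonneg (hs0 j).le t)
          calc (t:ℝ) ^ (m j) ≤ (t:ℝ) ^ ((⌈m j⌉₊ : ℝ)) :=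
              Real.rpow_le_rpow_of_exponent_le h1t (Nat.le_ceil _)
            _ = (t:ℝ) ^ (⌈m j⌉₊) := Real.rpow_natCast _ _
        refine h1.trans ?_
        rw [hBdef]
        exact Summable.sum_le_tsum _
          (fun t _ => mul_nonneg (by positivity) (pow_nonneg (hs0 j).le t)) hM
      have hnlt : ¬ L < l j := not_lt.mpr hcase.le
      have hne : ¬ l j = L := ne_of_lt hcase
      rw [hAdef, hUdef]; dsimp only
      rw [if_neg hnlt, if_neg hne, if_neg hnlt, if_neg hne]
      have t2 : (k j * Lb ^ (m j) * (((β:ℝ) ^ i) ^ L)) *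
            (∑ t ∈ Finset.Icc 1 i, (s j) ^ t * (t:ℝ) ^ (m j))
          ≤ (k j * Lb ^ (m j) * (((β:ℝ) ^ i) ^ L)) * B j :=
        mul_le_mul_of_nonneg_left hE hKnn
      calc c' * k j * (((β:ℝ) ^ i) ^ L) + (k j * Lb ^ (m j) * (((β:ℝ) ^ i) ^ L)) *
            (∑ t ∈ Finset.Icc 1 i, (s j) ^ t * (t:ℝ) ^ (m j))
          ≤ c' * k j * (((β:ℝ) ^ i) ^ L) +
            (k j * Lb ^ (m j) * (((β:ℝ) ^ i) ^ L)) * B j := by linarith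
        _ = (c' + Lb ^ (m j) * B j) * (k j * (((β:ℝ) ^ i) ^ L)) := by ring
  -- assembled bound
  have step : ∀ i : ℕ, 1 ≤ i → q i ≤ ∑ j, A j * U j i := by
    intro i hi
    have hq0 : q 0 ≤ c' * ∑ j, k j := by
      refine le_trans hc (mul_le_mul_of_nonneg_right (le_max_left _ _) ?_)
      exact Finset.sum_nonneg fun j _ => (hk j).le
    calc q i = α ^ i * q 0 + ∑ t ∈ Finset.Icc 1 i, α ^ (i - t) * g t := key i
      _ ≤ α ^ i * (c' * ∑ j, k j) + ∑ t ∈ Finset.Icc 1 i, α ^ (i - t) * g t :=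
          add_le_add_left (mul_le_mul_of_nonneg_left hq0 (pow_nonneg hα0.le i)) _
      _ = ∑ j, (c' * k j * α ^ i + ∑ t ∈ Finset.Icc 1 i,
            α ^ (i - t) * (k j * ((β ^ t : ℝ)) ^ (l j) * ((t:ℝ) * Lb) ^ (m j))) := by
          rw [Finset.sum_add_distrib]
          congr 1
          · rw [Finset.mul_sum, Finset.mul_sum]; apply Finset.sum_congr rfl; intros; ring
          · rw [Finset.sum_comm]
            apply Finset.sum_congr rfl; intro t _
            rw [hg, Finset.mul_sum]
      _ ≤ ∑ j, A j * U j i := Finset.sum_le_sum fun j _ => main j i hi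
  -- nonnegativity of U
  have hUnn : ∀ j, ∀ i : ℕ, 0 ≤ U j i := by
    intro j i
    have h1 : (0:ℝ) ≤ (i:ℝ) * Lb := by positivity
    have h2 : (0:ℝ) ≤ (β:ℝ) ^ i := by positivity
    rw [hUdef]
    dsimp only
    split_ifs <;>
      first
        | exact mul_nonneg (mul_nonneg (hk j).le (Real.rpow_nonneg h2 _)) (Real.rpow_nonneg h1 _)
        | exact mul_nonneg (hk j).le (Real.rpow_nonneg h2 _)
  set C := 1 + ∑ j, |A j| with hCdef
  have hC : 0 < C := by
    have : (0:ℝ) ≤ ∑ j, |A j| := Finset.sum_nonneg fun j _ => abs_nonneg _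
    linarith
  have hAC : ∀ j, A j ≤ C := by
    intro j
    have h1 : |A j| ≤ ∑ j, |A j| :=
      Finset.single_le_sum (fun j _ => abs_nonneg (A j)) (Finset.mem_univ j)
    have := le_abs_self (A j)
    linarith
  have hUsum : ∀ i : ℕ, ∑ j, U j i =
      (∑ j ∈ Finset.univ.filter (fun j => L < l j),
          k j * ((β ^ i : ℝ)) ^ (l j) * ((i:ℝ) * Lb) ^ (m j)) +
      (∑ j ∈ Finset.univ.filter (fun j => l j = L),
          k j * ((β ^ i : ℝ)) ^ (l j) * ((i:ℝ) * Lb) ^ (m j + 1)) +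
      (∑ j ∈ Finset.univ.filter (fun j => l j < L),
          k j * ((β ^ i : ℝ)) ^ L) := by
    intro i
    rw [← Finset.sum_filter_add_sum_filter_not Finset.univ (fun j => L < l j) (fun j => U j i)]
    rw [← Finset.sum_filter_add_sum_filter_not (Finset.univ.filter (fun j => ¬ L < l j))
      (fun j => l j = L) (fun j => U j i)]
    rw [Finset.filter_filter, Finset.filter_filter, ← add_assoc]
    have e1 : (Finset.univ.filter (fun j => ¬L < l j ∧ l j = L))
        = Finset.univ.filter (fun j => l j = L) := by
      apply Finset.filter_congr
      intro j _
      constructor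
      · exact fun h => h.2
      · exact fun h => ⟨by rw [h]; exact lt_irrefl L, h⟩
    have e2 : (Finset.univ.filter (fun j => ¬L < l j ∧ ¬l j = L))
        = Finset.univ.filter (fun j => l j < L) := by
      apply Finset.filter_congr
      intro j _
      constructor
      · exact fun h => lt_of_le_of_ne (not_lt.mp h.1) h.2
      · exact fun h => ⟨not_lt.mpr h.le, ne_of_lt h⟩
    rw [e1, e2]
    congr 1
    · congr 1
      · refine Finset.sum_congr rfl fun j hj => ?_
        have h := (Finset.mem_filter.mp hj).2
        simp only [hUdef]
        rw [if_pos h]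
      · refine Finset.sum_congr rfl fun j hj => ?_
        have h := (Finset.mem_filter.mp hj).2
        simp only [hUdef]
        rw [if_neg (by rw [h]; exact lt_irrefl L), if_pos h]
    · refine Finset.sum_congr rfl fun j hj => ?_
      have h := (Finset.mem_filter.mp hj).2
      simp only [hUdef]
      rw [if_neg (not_lt.mpr h.le), if_neg (ne_of_lt h)]
  refine ⟨C, hC, ?_⟩
  intro i hi
  have hlogrw : Real.log ((β:ℝ) ^ i) = (i:ℝ) * Lb := by rw [Real.log_pow]
  rw [hlogrw]
  calc q i ≤ ∑ j, A j * U j i := step i hi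
    _ ≤ ∑ j, C * U j i :=
        Finset.sum_le_sum fun j _ => mul_le_mul_of_nonneg_right (hAC j) (hUnn j i)
    _ = C * ∑ j, U j i := (Finset.mul_sum _ _ _).symm
    _ = _ := by rw [hUsum i]
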